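/- Let A be a unital C*-algebra, let p ∈ A be a projection (p = p* = p²), let z ∈ A satisfy z = zp, and suppose there is a real δ > 0 with p z* z p ≥ δ² p. Then there exists w ∈ A such that w* w = p and (w w*) z = z; in particular q = w w* is a projection in A with q z = z, and q is Murray–von Neumann equivalent to p. -/

import Mathlib

lemma commute_cfc_aux {A : Type*} [CStarAlgebra A] (a x : A)
    (hx : Commute x a) (f : ℝ → ℝ) : Commute x (cfc f a) := by
  refine cfc_cases (fun y => Commute x y) a f (Commute.zero_right x) fun hf ha' => ?_
  set φ : C(spectrum ℝ a, ℝ) →⋆ₐ[ℝ] A := cfcHom ha' with hφdef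
  have hφ : Continuous φ := (cfcHom_isClosedEmbedding ha').continuous
  suffices key : ∀ g : C(spectrum ℝ a, ℝ), Commute x (φ g) from key _
  intro g
  induction g using ContinuousMap.induction_on_of_compact with
  | const r =>
      have : φ (ContinuousMap.const _ r) = algebraMap ℝ A r := by
        rw [show ContinuousMap.const (spectrum ℝ a) r = algebraMap ℝ C(spectrum ℝ a, ℝ) r from rfl]
        exact AlgHomClass.commutes φ r
      rw [this]
      exact Algebra.commute_algebraMap_right r x
  | id =>
      have : φ (ContinuousMap.restrict (spectrum ℝ a) (ContinuousMap.id ℝ)) = a := cfcHom_id ha'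
      rw [this]; exact hx
  | star_id =>
      have hst : star (ContinuousMap.restrict (spectrum ℝ a) (ContinuousMap.id ℝ))
          = ContinuousMap.restrict (spectrum ℝ a) (ContinuousMap.id ℝ) := by
        ext t; simp
      rw [hst]
      have : φ (ContinuousMap.restrict (spectrum ℝ a) (ContinuousMap.id ℝ)) = a := cfcHom_id ha'
      rw [this]; exact hx
  | add f g hf hg => rw [map_add]; exact hf.add_right hg
  | mul f g hf hg => rw [map_mul]; exact hf.mul_right hg
  | frequently f hf =>
      have hcl : IsClosed {g : C(spectrum ℝ a, ℝ) | Commute x (φ g)} := by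
        simp only [Commute, SemiconjBy]
        exact isClosed_eq (continuous_const.mul hφ) (hφ.mul continuous_const)
      exact hcl.closure_subset (mem_closure_iff_frequently.mpr hf)


/-- If `z = zp` with `p` a projection and `p z* z p ≥ δ² p` for some `δ > 0`, then
there is `w` with `w*w = p` and `(ww*)z = z`, i.e. the range projection `q = ww*`
of `z` satisfies `qz = z` and is Murray–von Neumann equivalent to `p`. -/
theorem stmt5 (A : Type*) [CStarAlgebra A] [PartialOrder A] [StarOrderedRing A]
    (p z : A) (hp : IsSelfAdjoint p) (hp2 : p * p = p)
    (hz : z = z * p) (δ : ℝ) (hδ : 0 < δ)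
    (hbound : (δ ^ 2 : ℝ) • p ≤ p * star z * z * p) :
    ∃ w : A, star w * w = p ∧ (w * star w) * z = z := by
  -- `a := z* z` is supported on the corner `pAp`
  set a : A := star z * z with ha_def
  have ha1 : a = p * star z * z * p := by
    conv_lhs => rw [ha_def, hz]
    rw [star_mul, hp.star_eq]
    simp only [mul_assoc]
  have ha_sa : IsSelfAdjoint a := IsSelfAdjoint.star_mul_self z
  have hpz : p * a = a := by
    rw [ha1, ← mul_assoc, ← mul_assoc, ← mul_assoc, hp2]
  have hzp : a * p = a := by
    conv_lhs => rw [ha1, mul_assoc, hp2, ← ha1]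
  -- the "corner-invertible" element
  set c : A := a + (δ ^ 2 : ℝ) • (1 : A) - (δ ^ 2 : ℝ) • p with hc_def
  have hc_sa : IsSelfAdjoint c := by
    refine IsSelfAdjoint.sub (ha_sa.add ?_)
      (IsSelfAdjoint.smul (star_trivial (δ ^ 2 : ℝ)) hp)
    exact IsSelfAdjoint.smul (star_trivial (δ ^ 2 : ℝ)) (IsSelfAdjoint.one A)
  have hpc : p * c = a := by
    rw [hc_def, mul_sub, mul_add, mul_smul_comm, mul_smul_comm, mul_one, hp2, hpz,
      add_sub_cancel_right]
  have hcp : c * p = a := by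
    rw [hc_def, sub_mul, add_mul, smul_mul_assoc, smul_mul_assoc, one_mul, hp2, hzp,
      add_sub_cancel_right]
  have hcomm_pc : Commute p c := hpc.trans hcp.symm
  -- `c ≥ δ² 1`, hence its spectrum lies in `[δ², ∞)`
  have hge : (δ ^ 2 : ℝ) • (1 : A) ≤ c := by
    rw [← sub_nonneg]
    have : c - (δ ^ 2 : ℝ) • (1 : A) = p * star z * z * p - (δ ^ 2 : ℝ) • p := by
      rw [hc_def, ← ha1]; abel
    rw [this, sub_nonneg]
    exact hbound
  have hspec : ∀ μ ∈ spectrum ℝ c, δ ^ 2 ≤ μ := by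
    intro μ hμ
    have hd : (0 : A) ≤ c - algebraMap ℝ A (δ ^ 2) := by
      rw [Algebra.algebraMap_eq_smul_one, sub_nonneg]; exact hge
    have hmem : μ - δ ^ 2 ∈ spectrum ℝ (c - algebraMap ℝ A (δ ^ 2)) := by
      rw [← spectrum.sub_singleton_eq]
      exact Set.sub_mem_sub hμ rfl
    have := spectrum_nonneg_of_nonneg hd hmem
    linarith
  have hδ2 : (0 : ℝ) < δ ^ 2 := by positivity
  -- the inverse square root of `c`
  set f : ℝ → ℝ := fun t => Real.sqrt t⁻¹ with hf_def
  have hf_cont : ContinuousOn f (spectrum ℝ c) := by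
    apply Real.continuous_sqrt.comp_continuousOn
    apply ContinuousOn.inv₀ continuousOn_id
    intro μ hμ
    exact ne_of_gt (lt_of_lt_of_le hδ2 (hspec μ hμ))
  set s : A := cfc f c with hs_def
  have hs_comm_p : Commute p s := commute_cfc_aux c p hcomm_pc f
  have hs_comm_c : Commute c s := commute_cfc_aux c c (Commute.refl c) f
  -- `s * s * c = 1`
  have hssc : s * s * c = 1 := by
    have h1 : s * s = cfc (fun t => f t * f t) c := (cfc_mul f f c hf_cont hf_cont).symm
    have h2 : c = cfc (id : ℝ → ℝ) c := (cfc_id ℝ c hc_sa).symm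
    rw [h1]
    nth_rewrite 2 [h2]
    rw [← cfc_mul (fun t => f t * f t) _ c (hf_cont.mul hf_cont) continuousOn_id]
    have h3 : (spectrum ℝ c).EqOn (fun t => (f t * f t) * id t) (fun _ => (1 : ℝ)) := by
      intro μ hμ
      have hμpos : 0 < μ := lt_of_lt_of_le hδ2 (hspec μ hμ)
      simp only [hf_def, id_eq]
      rw [Real.mul_self_sqrt (by positivity)]
      field_simp
    rw [cfc_congr h3, cfc_const 1 c hc_sa, map_one]
  have hself_s : IsSelfAdjoint s := cfc_predicate f c
  -- the partial isometry
  have hacp : a = c * p := hcp.symm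
  refine ⟨z * s, ?_, ?_⟩
  · have h3 : star (z * s) * (z * s) = s * (a * s) := by
      rw [star_mul, hself_s.star_eq]
      simp only [ha_def, mul_assoc]
    rw [h3, hacp, mul_assoc c, hs_comm_p.eq, ← mul_assoc c, hs_comm_c.eq,
      ← mul_assoc, ← mul_assoc, hssc, one_mul]
  · have h4 : z * s * star (z * s) * z = z * (s * s * a) := by
      rw [star_mul, hself_s.star_eq]
      simp only [ha_def, mul_assoc]
    have key : s * s * (c * p) = p := by rw [← mul_assoc, hssc, one_mul]
    rw [h4, hacp, key, ← hz]
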